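/- For the online iterates yₘ := Tₘᴷ(yₘ₋₁), the tracking error satisfies limsup_{m→∞} ‖yₘ − y*ₘ‖ ≤ ρ/(1 − Δ) + σ Δᴷ/(1 − Δᴷ). -/

import Mathlib

/-- asymptotic tracking bound for the online iterates `yₘ = Tₘᴷ(yₘ₋₁)`:
`limsup_{m→∞} ‖yₘ − y*ₘ‖ ≤ ρ/(1 − Δ) + σ Δᴷ/(1 − Δᴷ)`. -/
theorem online_tracking_limsup {Y : Type*} [NormedAddCommGroup Y] [NormedSpace ℝ Y]
    (Δ ρ σ : ℝ) (hΔ0 : 0 ≤ Δ) (hΔ1 : Δ < 1) (hρ : 0 ≤ ρ) (hσ : 0 ≤ σ)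
    (K : ℕ) (hK : 1 ≤ K)
    (That T : ℕ → Y → Y) (ys : ℕ → Y)
    (hcontr : ∀ m (y y' : Y), ‖That m y - That m y'‖ ≤ Δ * ‖y - y'‖)
    (hfix : ∀ m, That m (ys m) = ys m)
    (hT : ∀ m y, ‖T m y - That m y‖ ≤ ρ)
    (hdrift : ∀ m, ‖ys (m + 1) - ys m‖ ≤ σ)
    (y : ℕ → Y) (hy : ∀ m, y (m + 1) = (T (m + 1))^[K] (y m)) :
    Filter.limsup (fun m => ‖y m - ys m‖) Filter.atTop ≤
      ρ / (1 - Δ) + σ * Δ ^ K / (1 - Δ ^ K) := by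
  have h1Δ : 0 < 1 - Δ := by linarith
  set q := Δ ^ K with hqdef
  have hq0 : 0 ≤ q := pow_nonneg hΔ0 K
  have hq1 : q < 1 := pow_lt_one₀ hΔ0 hΔ1 (by omega)
  have h1q : 0 < 1 - q := by linarith
  set L := ρ / (1 - Δ) + σ * q / (1 - q) with hLdef
  -- one-step bound
  have step : ∀ m (z : Y), ‖T m z - ys m‖ ≤ Δ * ‖z - ys m‖ + ρ := by
    intro m z
    have he : T m z - ys m = (T m z - That m z) + (That m z - That m (ys m)) := by
      rw [hfix]; abel
    rw [he]
    have := norm_add_le (T m z - That m z) (That m z - That m (ys m))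
    have h1 := hT m z
    have h2 := hcontr m z (ys m)
    linarith
  -- K-step bound
  have iter : ∀ n m (z : Y),
      ‖(T m)^[n] z - ys m‖ ≤ Δ ^ n * ‖z - ys m‖ + ρ * (1 - Δ ^ n) / (1 - Δ) := by
    intro n
    induction n with
    | zero => intro m z; simp
    | succ n ih =>
      intro m z
      rw [Function.iterate_succ_apply']
      have h1 := step m ((T m)^[n] z)
      have h2 := ih m z
      have h3 : Δ * ‖(T m)^[n] z - ys m‖ ≤ Δ * (Δ ^ n * ‖z - ys m‖ + ρ * (1 - Δ ^ n) / (1 - Δ)) :=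
        mul_le_mul_of_nonneg_left h2 hΔ0
      have hne : (1 : ℝ) - Δ ≠ 0 := ne_of_gt h1Δ
      have key : Δ * (Δ ^ n * ‖z - ys m‖ + ρ * (1 - Δ ^ n) / (1 - Δ)) + ρ =
          Δ ^ (n + 1) * ‖z - ys m‖ + ρ * (1 - Δ ^ (n + 1)) / (1 - Δ) := by
        field_simp
        ring
      linarith [key ▸ (h1.trans (by linarith : Δ * ‖(T m)^[n] z - ys m‖ + ρ ≤
        Δ * (Δ ^ n * ‖z - ys m‖ + ρ * (1 - Δ ^ n) / (1 - Δ)) + ρ))]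
  -- recursion for e m
  set e := fun m => ‖y m - ys m‖ with hedef
  have hrec : ∀ m, e (m + 1) ≤ q * e m + (1 - q) * L := by
    intro m
    have h1 : e (m + 1) ≤ q * ‖y m - ys (m + 1)‖ + ρ * (1 - q) / (1 - Δ) := by
      simpa [hedef, hy m] using iter K (m + 1) (y m)
    have h2 : ‖y m - ys (m + 1)‖ ≤ e m + σ := by
      have he2 : y m - ys (m + 1) = (y m - ys m) - (ys (m + 1) - ys m) := by abel
      rw [he2]
      have hn := norm_sub_le (y m - ys m) (ys (m + 1) - ys m)
      have hd := hdrift m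
      simp only [hedef]
      linarith
    have h3 : q * ‖y m - ys (m + 1)‖ ≤ q * (e m + σ) := mul_le_mul_of_nonneg_left h2 hq0
    have key : q * (e m + σ) + ρ * (1 - q) / (1 - Δ) = q * e m + (1 - q) * L := by
      rw [hLdef]
      field_simp
      ring
    calc e (m + 1) ≤ q * (e m + σ) + ρ * (1 - q) / (1 - Δ) := by linarith
      _ = q * e m + (1 - q) * L := key
  -- geometric bound
  set C := max (e 0 - L) 0 with hCdef
  have hC0 : 0 ≤ C := le_max_right _ _
  have bound : ∀ m, e m ≤ L + q ^ m * C := by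
    intro m
    induction m with
    | zero =>
      have : e 0 - L ≤ C := le_max_left _ _
      simp only [pow_zero, one_mul]
      linarith
    | succ m ih =>
      have h1 := hrec m
      have h2 : q * e m ≤ q * (L + q ^ m * C) := mul_le_mul_of_nonneg_left ih hq0
      have : q * (L + q ^ m * C) + (1 - q) * L = L + q ^ (m + 1) * C := by ring
      linarith
  -- limsup
  have htend : Filter.Tendsto (fun m => L + q ^ m * C) Filter.atTop (nhds L) := by
    have hp : Filter.Tendsto (fun m : ℕ => q ^ m) Filter.atTop (nhds 0) :=
      tendsto_pow_atTop_nhds_zero_of_lt_one hq0 hq1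
    have := Filter.Tendsto.add (tendsto_const_nhds (x := L) (f := Filter.atTop (α := ℕ)))
      (hp.mul_const C)
    simpa using this
  have hcob : Filter.IsCoboundedUnder (· ≤ ·) Filter.atTop e :=
    Filter.isCoboundedUnder_le_of_le Filter.atTop (x := 0) (fun m => norm_nonneg _)
  have hbd : Filter.IsBoundedUnder (· ≤ ·) Filter.atTop (fun m => L + q ^ m * C) :=
    htend.isBoundedUnder_le
  calc Filter.limsup e Filter.atTop
      ≤ Filter.limsup (fun m => L + q ^ m * C) Filter.atTop :=
        Filter.limsup_le_limsup (Filter.Eventually.of_forall bound) hcob hbd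
    _ = L := htend.limsup_eq
    _ = ρ / (1 - Δ) + σ * Δ ^ K / (1 - Δ ^ K) := by rw [hLdef]
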